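/- The generalized extreme value c.d.f. G(x) = exp(-(1 + ξ·x)₊^{-1/ξ}) with μ = 0, σ = 1, and ξ > -1, ξ ≠ 0, has mode M = ((1+ξ)^{-ξ} - 1)/ξ, and its Arnold–Groeneveld skewness equals 1 - 2·exp(-(1+ξ)). -/

import Mathlib

open Real Set Filter Topology

lemma aux_gev (a y : ℝ) (ha : 0 < a) (hy : 0 < y) :
    y ^ a * Real.exp (-y) ≤ a ^ a * Real.exp (-a) := by
  rw [Real.rpow_def_of_pos hy, Real.rpow_def_of_pos ha, ← Real.exp_add, ← Real.exp_add]
  apply Real.exp_le_exp.2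
  have h := Real.log_le_sub_one_of_pos (div_pos hy ha)
  rw [Real.log_div hy.ne' ha.ne'] at h
  have h2 : a * (Real.log y - Real.log a) ≤ a * (y / a - 1) :=
    mul_le_mul_of_nonneg_left h ha.le
  have h3 : a * (y / a - 1) = y - a := by field_simp
  nlinarith

/-- The generalized extreme value c.d.f. `G(x) = exp(-(1+ξx)₊^{-1/ξ})` with `ξ > -1`,
`ξ ≠ 0`, has mode `M = ((1+ξ)^{-ξ} - 1)/ξ` (maximizer of the density `G'`), and its
Arnold–Groeneveld skewness `1 - 2 G(M)` equals `1 - 2 exp(-(1+ξ))`. -/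
theorem stmt_10 (ξ : ℝ) (hξ : -1 < ξ) (hξ0 : ξ ≠ 0)
    (G : ℝ → ℝ) (hG : ∀ x, G x = Real.exp (-(max (1 + ξ * x) 0) ^ (-1 / ξ)))
    (M : ℝ) (hM : M = ((1 + ξ) ^ (-ξ) - 1) / ξ) :
    (∀ x, deriv G x ≤ deriv G M) ∧ 1 - 2 * G M = 1 - 2 * Real.exp (-(1 + ξ)) := by
  have ha : 0 < 1 + ξ := by linarith
  have hp0 : (-1 / ξ) ≠ 0 := div_ne_zero (by norm_num) hξ0
  have hMt : 1 + ξ * M = (1 + ξ) ^ (-ξ) := by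
    rw [hM]; field_simp; ring
  have hT : (0:ℝ) < (1 + ξ) ^ (-ξ) := Real.rpow_pos_of_pos ha _
  have hTp : ((1 + ξ) ^ (-ξ) : ℝ) ^ (-1 / ξ) = 1 + ξ := by
    rw [← Real.rpow_mul ha.le]
    have : (-ξ) * (-1 / ξ) = 1 := by field_simp
    rw [this, Real.rpow_one]
  have hGM : G M = Real.exp (-(1 + ξ)) := by
    rw [hG, hMt, max_eq_left hT.le, hTp]
  -- general derivative formula on the interior
  have key : ∀ x : ℝ, 0 < 1 + ξ * x →
      HasDerivAt G (Real.exp (-(1 + ξ * x) ^ (-1 / ξ)) * (1 + ξ * x) ^ (-1 / ξ - 1)) x := by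
    intro x hx
    have h1 : HasDerivAt (fun y : ℝ => 1 + ξ * y) ξ x := by
      simpa using ((hasDerivAt_id x).const_mul ξ).const_add 1
    have h2 : HasDerivAt (fun t : ℝ => t ^ (-1 / ξ))
        ((-1 / ξ) * (1 + ξ * x) ^ (-1 / ξ - 1)) (1 + ξ * x) :=
      Real.hasDerivAt_rpow_const (Or.inl hx.ne')
    have h3 := h2.comp x h1
    have h4 : HasDerivAt (fun y : ℝ => Real.exp (-(1 + ξ * y) ^ (-1 / ξ)))
        (Real.exp (-(1 + ξ * x) ^ (-1 / ξ)) * (1 + ξ * x) ^ (-1 / ξ - 1)) x := by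
      have h5 := h3.neg.exp
      convert h5 using 1
      · rfl
      show _ = Real.exp (-(1 + ξ * x) ^ (-1 / ξ)) * -(-1 / ξ * (1 + ξ * x) ^ (-1 / ξ - 1) * ξ)
      congr 1
      field_simp
    refine h4.congr_of_eventuallyEq ?_
    have hopen : ∀ᶠ y in 𝓝 x, 0 < 1 + ξ * y := by
      have hc : Continuous fun y : ℝ => 1 + ξ * y := by continuity
      exact (isOpen_lt continuous_const hc).eventually_mem hx
    filter_upwards [hopen] with y hy
    rw [hG y, max_eq_left hy.le]
  -- value of deriv G at M
  have hTp1 : ((1 + ξ) ^ (-ξ) : ℝ) ^ (-1 / ξ - 1) = (1 + ξ) ^ (1 + ξ) := by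
    rw [← Real.rpow_mul ha.le]
    congr 1
    field_simp; ring
  have hderivM : deriv G M = Real.exp (-(1 + ξ)) * (1 + ξ) ^ (1 + ξ) := by
    have := (key M (by rw [hMt]; exact hT)).deriv
    rw [this, hMt, hTp, hTp1]
  have hD : 0 < deriv G M := by
    rw [hderivM]
    positivity
  refine ⟨fun x => ?_, by rw [hGM]⟩
  rcases le_or_gt (1 + ξ * x) 0 with hx | hx
  · -- G x = 1 is a global max, so deriv = 0
    have hGx1 : G x = 1 := by
      rw [hG, max_eq_right hx, Real.zero_rpow hp0, neg_zero, Real.exp_zero]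
    have hmax : IsLocalMax G x := by
      apply Filter.Eventually.of_forall
      intro y
      rw [hGx1, hG]
      have : (0:ℝ) ≤ (max (1 + ξ * y) 0) ^ (-1 / ξ) :=
        Real.rpow_nonneg (le_max_right _ _) _
      calc Real.exp (-(max (1 + ξ * y) 0) ^ (-1 / ξ)) ≤ Real.exp 0 :=
            Real.exp_le_exp.2 (by linarith)
        _ = 1 := Real.exp_zero
    rw [hmax.deriv_eq_zero]
    exact hD.le
  · -- interior: use the formula and aux_gev
    rw [(key x hx).deriv, hderivM]
    set t := 1 + ξ * x with htdef
    set y := t ^ (-1 / ξ) with hydef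
    have hy : 0 < y := Real.rpow_pos_of_pos hx _
    have ht1 : t ^ (-1 / ξ - 1) = y ^ (1 + ξ) := by
      have h6 : t ^ (-1 / ξ - 1) = (t ^ (-1/ξ)) ^ ((-1/ξ - 1) / (-1/ξ)) := by
        rw [← Real.rpow_mul hx.le]
        congr 1
        field_simp
      rw [h6, ← hydef]
      congr 1
      field_simp
      ring
    rw [ht1]
    calc Real.exp (-y) * y ^ (1 + ξ) = y ^ (1 + ξ) * Real.exp (-y) := by ring
      _ ≤ (1 + ξ) ^ (1 + ξ) * Real.exp (-(1 + ξ)) := aux_gev _ _ ha hy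
      _ = Real.exp (-(1 + ξ)) * (1 + ξ) ^ (1 + ξ) := by ring
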